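/- A subadditive triangle (s(i,j))_{i<j} is determined by its column sums: if s and s' are two subadditive triangles with ∑_{i=0}^{j-1} s(i,j) = ∑_{i=0}^{j-1} s'(i,j) for all j ≥ 1, then s = s'. -/
import Mathlib


open Classical

noncomputable section

/-- The minimal excludant of a set of naturals. -/
def mex (S : Set ℕ) : ℕ := sInf {v | v ∉ S}

/-- A rule sequence is regular if `f 0 = 0`, `f n ≤ n`, and `f` increases by 0 or 1. -/
def Regular (f : ℕ → ℕ) : Prop :=
  f 0 = 0 ∧ (∀ n, f n ≤ n) ∧ ∀ n, f n ≤ f (n + 1) ∧ f (n + 1) ≤ f n + 1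

/-- `g` is the Grundy sequence for Maximum Nim with rule `f`:
`g n = mex { g (n - i) : 1 ≤ i ≤ f n }`. -/
def MaxNimGrundy (f g : ℕ → ℕ) : Prop :=
  ∀ n, g n = mex {v | ∃ i, 1 ≤ i ∧ i ≤ f n ∧ g (n - i) = v}

/-- `h` is the Grundy sequence for Minimum Nim with rule `f`:
`h n = mex { h i : 0 ≤ i ≤ n - f n - 1 }`. -/
def MinNimGrundy (f h : ℕ → ℕ) : Prop :=
  ∀ n, h n = mex {v | ∃ i, i + f n + 1 ≤ n ∧ h i = v}

/-- Every natural number occurs infinitely often. -/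
def Infinitive (g : ℕ → ℕ) : Prop := ∀ k, {n | g n = k}.Infinite

/-- The position of the first occurrence of `k` in `g`. -/
def firstOcc (g : ℕ → ℕ) (k : ℕ) : ℕ := sInf {n | g n = k}

/-- `n` is not the first occurrence of its value in `g`. -/
def NotFirst (g : ℕ → ℕ) (n : ℕ) : Prop := ∃ m < n, g m = g n

/-- The subsequence of `g` obtained by deleting the first occurrence of each value. -/
def Lam (g : ℕ → ℕ) : ℕ → ℕ := fun m => g (Nat.nth (NotFirst g) m)

/-- Kimberling's fractal sequences: infinitive, first occurrences in increasing
order of value (F2), and deleting first occurrences leaves the sequence unchanged (F3). -/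
def Fractal (g : ℕ → ℕ) : Prop :=
  Infinitive g ∧
  (∀ j k, j < k → firstOcc g j < firstOcc g k) ∧
  (∀ m, Lam g m = g m)

/-- The restriction `g|M`: the subsequence of terms of `g` lying in `M`. -/
def restrictSeq (g : ℕ → ℕ) (M : Set ℕ) : ℕ → ℕ :=
  fun m => g (Nat.nth (fun n => g n ∈ M) m)

/-- An interspersion: an infinitive sequence such that for `i < j` the restriction
`g|{i,j}` is an initial block of `i`'s followed by strict alternation `j, i, j, i, ...`. -/
def Interspersion (g : ℕ → ℕ) : Prop :=
  Infinitive g ∧ ∀ i j, i < j → ∃ N,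
    (∀ n < N, restrictSeq g {i, j} n = i) ∧
    ∀ n, restrictSeq g {i, j} (N + 2 * n) = j ∧
         restrictSeq g {i, j} (N + 2 * n + 1) = i

/-- `striangle g i j`: the number of occurrences of `i` strictly before the first
occurrence of `j`, not counting the occurrence `g 0 = 0` when `i = 0`. -/
def striangle (g : ℕ → ℕ) (i j : ℕ) : ℕ :=
  Set.ncard {n | g n = i ∧ n < firstOcc g j ∧ (i = 0 → n ≠ 0)}

/-- A subadditive triangle: `s i j + s j k - 1 ≤ s i k ≤ s i j + s j k` for `i < j < k`. -/
def SubadditiveTriangle (s : ℕ → ℕ → ℕ) : Prop :=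
  ∀ i j k, i < j → j < k →
    s i j + s j k ≤ s i k + 1 ∧ s i k ≤ s i j + s j k

/-- a subadditive triangle is determined by its column sums. -/
theorem subadditiveTriangle_determined_by_column_sums (s s' : ℕ → ℕ → ℕ)
    (hs : SubadditiveTriangle s) (hs' : SubadditiveTriangle s')
    (hc : ∀ j, 1 ≤ j → ∑ i ∈ Finset.range j, s i j = ∑ i ∈ Finset.range j, s' i j) :
    ∀ i j, i < j → s i j = s' i j := by
  intro i j hij
  induction j using Nat.strong_induction_on generalizing i with
  | _ k ih =>
    set d : ℕ → ℤ := fun m => (s m k : ℤ) - s' m k with hd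
    have claim1 : ∀ a b, a < b → b < k → |d a - d b| ≤ 1 := by
      intro a b hab hbk
      have h1 := hs a b k hab hbk
      have h2 := hs' a b k hab hbk
      have he : s a b = s' a b := ih b hbk a hab
      simp only [hd]
      rw [abs_le]
      constructor <;> push_cast <;> omega
    have hsum : ∑ m ∈ Finset.range k, d m = 0 := by
      have h := hc k (by omega)
      have h' : (∑ m ∈ Finset.range k, (s m k : ℤ)) =
          ∑ m ∈ Finset.range k, (s' m k : ℤ) := by exact_mod_cast h
      simp only [hd, Finset.sum_sub_distrib, h', sub_self]
    have key : ∀ m, m < k → d m = 0 := by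
      intro m hm
      by_contra hne
      rcases lt_or_gt_of_ne hne with hneg | hpos
      · have hall : ∀ a ∈ Finset.range k, d a ≤ 0 := by
          intro a ha
          rcases lt_trichotomy a m with h' | rfl | h'
          · have := claim1 a m h' hm; rw [abs_le] at this; omega
          · omega
          · have := claim1 m a h' (Finset.mem_range.mp ha)
            rw [abs_le] at this; omega
        have := (Finset.sum_eq_zero_iff_of_nonpos hall).mp hsum m
          (Finset.mem_range.mpr hm)
        omega
      · have hall : ∀ a ∈ Finset.range k, 0 ≤ d a := by
          intro a ha
          rcases lt_trichotomy a m with h' | rfl | h'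
          · have := claim1 a m h' hm; rw [abs_le] at this; omega
          · omega
          · have := claim1 m a h' (Finset.mem_range.mp ha)
            rw [abs_le] at this; omega
        have := (Finset.sum_eq_zero_iff_of_nonneg hall).mp hsum m
          (Finset.mem_range.mpr hm)
        omega
    have := key i hij
    simp only [hd, sub_eq_zero] at this
    exact_mod_cast this
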